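/- arXiv:2306.12204 — 2 statements merged into one kernel-verified Lean document; each statement's English description precedes it below -/
import Mathlib

section
/- Let U ⊆ ℂ be a bounded connected open set, and let W_n, W ⊆ U be bounded connected open sets with 0 ∈ W_n for all n and 0 ∈ W. If d_H(closure(W_n), closure(W)) → 0 and d_H(∂W_n, ∂W) → 0 (Hausdorff distances), then η_{W_n}(p) → η_W(p) for every p ∈ W. (This combines Theorem 1.9 and Theorem 1.4 of the paper, in the case of the trivial single-leaf nonsingular foliation of U.) -/
open Filter Metric Topology Set

noncomputable def eta (Ω : Set ℂ) (p : ℂ) : ℝ :=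
  sSup {r : ℝ | ∃ f : ℂ → ℂ, DifferentiableOn ℂ f (ball (0 : ℂ) 1) ∧ f 0 = p ∧
    (∀ z ∈ ball (0 : ℂ) 1, f z ∈ Ω) ∧ r = ‖deriv f 0‖}

namespace EtaProof

def etaSet (Ω : Set ℂ) (p : ℂ) : Set ℝ :=
  {r : ℝ | ∃ f : ℂ → ℂ, DifferentiableOn ℂ f (ball (0 : ℂ) 1) ∧ f 0 = p ∧
    (∀ z ∈ ball (0 : ℂ) 1, f z ∈ Ω) ∧ r = ‖deriv f 0‖}

lemma eta_eq (Ω : Set ℂ) (p : ℂ) : eta Ω p = sSup (etaSet Ω p) := rfl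

lemma mem_etaSet_le {Ω : Set ℂ} {p c : ℂ} {R : ℝ} (hΩ : Ω ⊆ ball c R) :
    ∀ r ∈ etaSet Ω p, r ≤ 2 * R := by
  rintro r ⟨f, hf, hf0, hmap, rfl⟩
  have h0 : (0 : ℂ) ∈ ball (0 : ℂ) 1 := mem_ball_self one_pos
  have hmaps : MapsTo f (ball (0 : ℂ) 1) (ball (f 0) (2 * R)) := by
    intro z hz
    have h1 : f z ∈ ball c R := hΩ (hmap z hz)
    have h2 : f 0 ∈ ball c R := hΩ (hmap 0 h0)
    rw [mem_ball] at h1 h2 ⊢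
    calc dist (f z) (f 0) ≤ dist (f z) c + dist c (f 0) := dist_triangle _ _ _
      _ < R + R := by rw [dist_comm c (f 0)]; exact add_lt_add h1 h2
      _ = 2 * R := by ring
  have := Complex.norm_deriv_le_div_of_mapsTo_ball hf (hmaps.mono_right ball_subset_closedBall) one_pos
  simpa using this

lemma bddAbove_etaSet {Ω : Set ℂ} {p c : ℂ} {R : ℝ} (hΩ : Ω ⊆ ball c R) :
    BddAbove (etaSet Ω p) :=
  ⟨2 * R, fun r hr => mem_etaSet_le hΩ r hr⟩

lemma zero_mem_etaSet {Ω : Set ℂ} {p : ℂ} (hp : p ∈ Ω) : (0 : ℝ) ∈ etaSet Ω p :=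
  ⟨fun _ => p, differentiableOn_const _, rfl, fun _ _ => hp, by simp⟩

lemma eta_nonneg {Ω : Set ℂ} {p c : ℂ} {R : ℝ} (hΩ : Ω ⊆ ball c R) (hp : p ∈ Ω) :
    0 ≤ eta Ω p :=
  le_csSup (bddAbove_etaSet hΩ) (zero_mem_etaSet hp)

lemma frontier_nonempty {s : Set ℂ} (hne : s.Nonempty) (hb : Bornology.IsBounded s) :
    (frontier s).Nonempty := by
  by_contra h
  rw [not_nonempty_iff_eq_empty] at h
  have hclopen : IsClopen s := isClopen_iff_frontier_eq_empty.2 h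
  rcases isClopen_iff.1 hclopen with rfl | rfl
  · exact hne.ne_empty rfl
  · obtain ⟨R, hR⟩ := hb.subset_closedBall 0
    have h1 : ((max R 0 + 1 : ℝ) : ℂ) ∈ closedBall (0 : ℂ) R := hR (mem_univ _)
    rw [mem_closedBall, dist_zero_right] at h1
    have h2 : ‖((max R 0 + 1 : ℝ) : ℂ)‖ = max R 0 + 1 := by
      rw [Complex.norm_real, Real.norm_eq_abs, abs_of_pos (by positivity)]
    rw [h2] at h1
    have : R ≤ max R 0 := le_max_left _ _
    linarith

lemma eventually_compact_subset
    {W : ℕ → Set ℂ} {W₀ : Set ℂ} (hWopen : ∀ n, IsOpen (W n))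
    (hWne : ∀ n, (W n).Nonempty) (hWbdd : ∀ n, Bornology.IsBounded (W n))
    (hW₀ne : W₀.Nonempty) (hW₀open : IsOpen W₀) (hW₀bdd : Bornology.IsBounded W₀)
    (hcl : Tendsto (fun n => hausdorffDist (closure (W n)) (closure W₀)) atTop (nhds 0))
    (hbd : Tendsto (fun n => hausdorffDist (frontier (W n)) (frontier W₀)) atTop (nhds 0))
    {K : Set ℂ} (hK : IsCompact K) (hKW : K ⊆ W₀) :
    ∀ᶠ n in atTop, K ⊆ W n := by
  rcases K.eq_empty_or_nonempty with rfl | hKne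
  · filter_upwards with n using empty_subset _
  have hfr₀ : (frontier W₀).Nonempty := frontier_nonempty hW₀ne hW₀bdd
  obtain ⟨x₀, hx₀K, hmin⟩ := hK.exists_isMinOn hKne
    ((continuous_infDist_pt (frontier W₀)).continuousOn)
  set δ := infDist x₀ (frontier W₀) with hδ
  have hx₀W : x₀ ∈ W₀ := hKW hx₀K
  have hx₀f : x₀ ∉ frontier W₀ := by
    rw [hW₀open.frontier_eq]
    exact fun h => h.2 hx₀W
  have hδpos : 0 < δ := (isClosed_frontier.notMem_iff_infDist_pos hfr₀).1 hx₀f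
  filter_upwards [hcl.eventually_lt_const (show (0:ℝ) < δ/4 by positivity),
    hbd.eventually_lt_const (show (0:ℝ) < δ/4 by positivity)] with n h1 h2
  intro x hxK
  have hxW₀ : x ∈ W₀ := hKW hxK
  have hδx : δ ≤ infDist x (frontier W₀) := hmin hxK
  have hne_cl : (closure (W n)).Nonempty := (hWne n).mono subset_closure
  have hfin : EMetric.hausdorffEdist (closure (W n)) (closure W₀) ≠ ⊤ :=
    hausdorffEdist_ne_top_of_nonempty_of_bounded hne_cl (hW₀ne.mono subset_closure)
      (hWbdd n).closure hW₀bdd.closure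
  obtain ⟨y, hy, hxy⟩ := exists_dist_lt_of_hausdorffDist_lt' (subset_closure hxW₀) h1 hfin
  have hfrn : (frontier (W n)).Nonempty := frontier_nonempty (hWne n) (hWbdd n)
  have hfinf : EMetric.hausdorffEdist (frontier (W n)) (frontier W₀) ≠ ⊤ :=
    hausdorffEdist_ne_top_of_nonempty_of_bounded hfrn hfr₀
      ((hWbdd n).closure.subset frontier_subset_closure)
      (hW₀bdd.closure.subset frontier_subset_closure)
  have hball_front : ∀ z ∈ frontier (W n), δ/2 ≤ dist z x := by
    intro z hz
    obtain ⟨w, hw, hzw⟩ := exists_dist_lt_of_hausdorffDist_lt hz h2 hfinf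
    have h3 : δ ≤ dist x w := le_trans hδx (infDist_le_dist_of_mem hw)
    have h4 : dist x w ≤ dist x z + dist z w := dist_triangle _ _ _
    rw [dist_comm z x]
    linarith
  have key : ball x (δ/2) ⊆ W n := by
    have hsub : ball x (δ/2) ⊆ W n ∪ (closure (W n))ᶜ := by
      intro z hz
      by_cases hzc : z ∈ closure (W n)
      · left
        by_contra hzW
        have hzf : z ∈ frontier (W n) := by
          rw [(hWopen n).frontier_eq]; exact ⟨hzc, hzW⟩
        have := hball_front z hzf
        rw [mem_ball] at hz
        linarith
      · right; exact hzc
    have hyW : (ball x (δ/2) ∩ W n).Nonempty := by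
      rcases Metric.mem_closure_iff.1 hy (δ/4) (by positivity) with ⟨y', hy', hyy'⟩
      refine ⟨y', mem_ball.2 ?_, hy'⟩
      calc dist y' x ≤ dist y' y + dist y x := dist_triangle _ _ _
        _ < δ/4 + δ/4 := by rw [dist_comm y' y]; exact add_lt_add hyy' hxy
        _ = δ/2 := by ring
    by_contra hnot
    obtain ⟨z, hzball, hzW⟩ := not_subset.1 hnot
    have hzcomp : z ∈ (closure (W n))ᶜ := (hsub hzball).resolve_left hzW
    obtain ⟨w, hws, hwu, hwv⟩ := (convex_ball x (δ/2)).isPreconnected (W n) (closure (W n))ᶜ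
      (hWopen n) isClosed_closure.isOpen_compl hsub hyW ⟨z, hzball, hzcomp⟩
    exact hwv (subset_closure hwu)
  exact key (mem_ball_self (by positivity))
lemma deriv_bound {f : ℂ → ℂ} {M : ℝ} (hd : DifferentiableOn ℂ f (ball 0 1))
    (hb : ∀ z ∈ ball (0:ℂ) 1, ‖f z‖ ≤ M) {r : ℝ} (hr : r < 1) :
    ∀ z ∈ closedBall (0:ℂ) r, ‖deriv f z‖ ≤ (2*M+1)/(1-r) := by
  intro z hz
  have hzr : ‖z‖ ≤ r := mem_closedBall_zero_iff.1 hz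
  have hz1 : ‖z‖ < 1 := lt_of_le_of_lt hzr hr
  have hM : 0 ≤ M := le_trans (norm_nonneg _) (hb 0 (mem_ball_self one_pos))
  have hsub : ball z (1 - ‖z‖) ⊆ ball (0:ℂ) 1 := by
    intro w hw
    rw [mem_ball, dist_zero_right]
    rw [mem_ball, dist_eq_norm] at hw
    calc ‖w‖ = ‖(w - z) + z‖ := by ring_nf
      _ ≤ ‖w - z‖ + ‖z‖ := norm_add_le _ _
      _ < (1 - ‖z‖) + ‖z‖ := by linarith
      _ = 1 := by ring
  have hd' : DifferentiableOn ℂ f (ball z (1 - ‖z‖)) := hd.mono hsub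
  have hmaps : MapsTo f (ball z (1 - ‖z‖)) (ball (f z) (2*M+1)) := by
    intro w hw
    rw [mem_ball]
    calc dist (f w) (f z) ≤ ‖f w‖ + ‖f z‖ := dist_le_norm_add_norm _ _
      _ ≤ M + M := add_le_add (hb w (hsub hw)) (hb z (by rw [mem_ball, dist_zero_right]; exact hz1))
      _ < 2*M + 1 := by linarith
  have hkey := Complex.norm_deriv_le_div_of_mapsTo_ball hd' (hmaps.mono_right ball_subset_closedBall) (by linarith : (0:ℝ) < 1 - ‖z‖)
  refine le_trans hkey ?_
  apply div_le_div_of_nonneg_left (by linarith) (by linarith) (by linarith)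

lemma lip {f : ℂ → ℂ} {M r : ℝ} (hd : DifferentiableOn ℂ f (ball 0 1))
    (hb : ∀ z ∈ ball (0:ℂ) 1, ‖f z‖ ≤ M) (hr1 : r < 1) :
    ∀ x ∈ closedBall (0:ℂ) r, ∀ y ∈ closedBall (0:ℂ) r,
      ‖f y - f x‖ ≤ ((2*M+1)/(1-r)) * ‖y - x‖ := by
  intro x hx y hy
  have hsub : closedBall (0:ℂ) r ⊆ ball (0:ℂ) 1 := by
    intro w hw
    rw [mem_ball, dist_zero_right]
    exact lt_of_le_of_lt (mem_closedBall_zero_iff.1 hw) hr1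
  exact (convex_closedBall (0:ℂ) r).norm_image_sub_le_of_norm_deriv_le
    (fun w hw => hd.differentiableAt (isOpen_ball.mem_nhds (hsub hw)))
    (deriv_bound hd hb hr1) hx hy
lemma montel {F : ℕ → ℂ → ℂ} {M : ℝ}
    (hd : ∀ k, DifferentiableOn ℂ (F k) (ball 0 1))
    (hb : ∀ k, ∀ z ∈ ball (0:ℂ) 1, ‖F k z‖ ≤ M) :
    ∃ (g : ℂ → ℂ) (φ : ℕ → ℕ), StrictMono φ ∧
      TendstoLocallyUniformlyOn (fun k => F (φ k)) g atTop (ball (0:ℂ) 1) := by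
  classical
  have hM : 0 ≤ M := le_trans (norm_nonneg _) (hb 0 0 (mem_ball_self one_pos))
  obtain ⟨d, hdense⟩ := TopologicalSpace.exists_dense_seq ℂ
  set y : ℕ → ℂ := fun i => if d i ∈ ball (0:ℂ) 1 then d i else 0 with hy
  have hyball : ∀ i, y i ∈ ball (0:ℂ) 1 := by
    intro i
    by_cases h : d i ∈ ball (0:ℂ) 1
    · rw [hy]; simp only [if_pos h]; exact h
    · rw [hy]; simp only [if_neg h]; exact mem_ball_self one_pos
  have hGmem : ∀ k, (fun i => F k (y i)) ∈ Set.pi univ (fun _ : ℕ => closedBall (0:ℂ) M) := by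
    intro k
    rw [mem_univ_pi]
    exact fun i => mem_closedBall_zero_iff.2 (hb k _ (hyball i))
  obtain ⟨v, hv, φ, hφ, hconv⟩ :=
    (isCompact_univ_pi (fun _ : ℕ => isCompact_closedBall (0:ℂ) M)).tendsto_subseq hGmem
  rw [tendsto_pi_nhds] at hconv
  have hptwise : ∀ i, Tendsto (fun k => F (φ k) (y i)) atTop (𝓝 (v i)) := fun i => hconv i
  -- uniform Cauchy on closed balls
  have hucauchy : ∀ r : ℝ, 0 ≤ r → r < 1 →
      UniformCauchySeqOn (fun k => F (φ k)) atTop (closedBall 0 r) := by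
    intro r hr0 hr1
    rw [Metric.uniformCauchySeqOn_iff]
    intro ε hε
    set r' := (1+r)/2 with hr'
    have hr'1 : r' < 1 := by rw [hr']; linarith
    set L := (2*M+1)/(1-r') with hL
    have hLpos : 0 < L := by
      apply div_pos (by linarith)
      rw [hr']; linarith
    set δ := min (ε/(3*(L+1))) ((1-r)/2) with hδdef
    have hδpos : 0 < δ := lt_min (by positivity) (by linarith)
    have hδr : δ ≤ (1-r)/2 := min_le_right _ _
    have hcover : closedBall (0:ℂ) r ⊆ ⋃ i : ℕ, ball (y i) δ := by
      intro x hx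
      have hxr : ‖x‖ ≤ r := mem_closedBall_zero_iff.1 hx
      obtain ⟨i, hi⟩ := hdense.exists_dist_lt x (lt_min hδpos (by linarith : (0:ℝ) < (1-r)/2))
      have hdi : d i ∈ ball (0:ℂ) 1 := by
        rw [mem_ball, dist_zero_right]
        have h1 : dist x (d i) < (1-r)/2 := lt_of_lt_of_le hi (min_le_right _ _)
        calc ‖d i‖ = ‖(d i - x) + x‖ := by ring_nf
          _ ≤ ‖d i - x‖ + ‖x‖ := norm_add_le _ _
          _ < (1-r)/2 + r := by
              rw [← dist_eq_norm, dist_comm]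
              exact add_lt_add_of_lt_of_le h1 hxr
          _ < 1 := by linarith
      have hyi : y i = d i := by rw [hy]; simp [hdi]
      refine mem_iUnion.2 ⟨i, ?_⟩
      rw [mem_ball, hyi]
      exact lt_of_lt_of_le hi (min_le_left _ _)
    obtain ⟨T, hT⟩ := (isCompact_closedBall (0:ℂ) r).elim_finite_subcover
      (fun i => ball (y i) δ) (fun i => isOpen_ball) hcover
    have hcau : ∀ i ∈ T, ∃ N, ∀ m ≥ N, ∀ n ≥ N,
        dist (F (φ m) (y i)) (F (φ n) (y i)) < ε/3 := by
      intro i _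
      have hc := (hptwise i).cauchySeq
      rw [Metric.cauchySeq_iff] at hc
      exact hc (ε/3) (by positivity)
    choose! N hN using hcau
    refine ⟨T.sup N, ?_⟩
    intro m hm n hn x hx
    have hxT := hT hx
    rw [mem_iUnion₂] at hxT
    obtain ⟨i, hiT, hxi⟩ := hxT
    have hxr : ‖x‖ ≤ r := mem_closedBall_zero_iff.1 hx
    have hdxy : dist x (y i) < δ := mem_ball.1 hxi
    have hyi : y i ∈ closedBall (0:ℂ) r' := by
      rw [mem_closedBall_zero_iff]
      calc ‖y i‖ = ‖(y i - x) + x‖ := by ring_nf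
        _ ≤ ‖y i - x‖ + ‖x‖ := norm_add_le _ _
        _ ≤ δ + r := by
            rw [← dist_eq_norm, dist_comm]
            exact add_le_add hdxy.le hxr
        _ ≤ (1-r)/2 + r := by linarith
        _ = r' := by rw [hr']; ring
    have hx' : x ∈ closedBall (0:ℂ) r' := by
      rw [mem_closedBall_zero_iff]
      refine le_trans hxr ?_
      rw [hr']; linarith
    have hLδ : L * δ < ε/3 := by
      have h1 : L * δ ≤ L * (ε/(3*(L+1))) :=
        mul_le_mul_of_nonneg_left (min_le_left _ _) hLpos.le
      refine lt_of_le_of_lt h1 ?_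
      rw [← mul_div_assoc, div_lt_div_iff₀ (by positivity) (by norm_num)]
      nlinarith
    have hlip1 : dist (F (φ m) x) (F (φ m) (y i)) ≤ L * δ := by
      rw [dist_eq_norm]
      calc ‖F (φ m) x - F (φ m) (y i)‖ ≤ L * ‖x - y i‖ :=
            lip (hd (φ m)) (hb (φ m)) hr'1 (y i) hyi x hx'
        _ ≤ L * δ := by
            apply mul_le_mul_of_nonneg_left _ hLpos.le
            rw [← dist_eq_norm]; exact hdxy.le
    have hlip2 : dist (F (φ n) x) (F (φ n) (y i)) ≤ L * δ := by
      rw [dist_eq_norm]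
      calc ‖F (φ n) x - F (φ n) (y i)‖ ≤ L * ‖x - y i‖ :=
            lip (hd (φ n)) (hb (φ n)) hr'1 (y i) hyi x hx'
        _ ≤ L * δ := by
            apply mul_le_mul_of_nonneg_left _ hLpos.le
            rw [← dist_eq_norm]; exact hdxy.le
    have hmid : dist (F (φ m) (y i)) (F (φ n) (y i)) < ε/3 :=
      hN i hiT m (le_trans (Finset.le_sup hiT) hm) n (le_trans (Finset.le_sup hiT) hn)
    calc dist (F (φ m) x) (F (φ n) x)
        ≤ dist (F (φ m) x) (F (φ m) (y i)) + dist (F (φ m) (y i)) (F (φ n) x) :=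
          dist_triangle _ _ _
      _ ≤ dist (F (φ m) x) (F (φ m) (y i)) + (dist (F (φ m) (y i)) (F (φ n) (y i))
            + dist (F (φ n) (y i)) (F (φ n) x)) := by
          gcongr
          exact dist_triangle _ _ _
      _ < L * δ + (ε/3 + L * δ) := by
          rw [dist_comm (F (φ n) (y i)) (F (φ n) x)]
          exact add_lt_add_of_le_of_lt hlip1 (add_lt_add_of_lt_of_le hmid hlip2)
      _ < ε := by linarith
  -- pointwise limit
  have hcs : ∀ z ∈ ball (0:ℂ) 1, CauchySeq (fun k => F (φ k) z) := by
    intro z hz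
    rw [mem_ball, dist_zero_right] at hz
    have h := hucauchy ‖z‖ (norm_nonneg z) hz
    rw [Metric.uniformCauchySeqOn_iff] at h
    rw [Metric.cauchySeq_iff]
    intro ε hε
    obtain ⟨Nn, hNn⟩ := h ε hε
    exact ⟨Nn, fun m hm n hn => hNn m hm n hn z (mem_closedBall_zero_iff.2 le_rfl)⟩
  set g : ℂ → ℂ := fun z => limUnder atTop (fun k => F (φ k) z) with hg
  have hgt : ∀ z ∈ ball (0:ℂ) 1, Tendsto (fun k => F (φ k) z) atTop (𝓝 (g z)) :=
    fun z hz => (hcs z hz).tendsto_limUnder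
  refine ⟨g, φ, hφ, ?_⟩
  rw [tendstoLocallyUniformlyOn_iff_forall_isCompact isOpen_ball]
  intro K hKball hK
  rcases K.eq_empty_or_nonempty with rfl | hKne
  · exact tendstoUniformlyOn_empty
  obtain ⟨x₀, hx₀, hmax⟩ := hK.exists_isMaxOn hKne continuous_norm.continuousOn
  have hr1 : ‖x₀‖ < 1 := by
    have := hKball hx₀; rwa [mem_ball, dist_zero_right] at this
  have hKsub : K ⊆ closedBall (0:ℂ) ‖x₀‖ := fun x hx => mem_closedBall_zero_iff.2 (hmax hx)
  have hsub1 : closedBall (0:ℂ) ‖x₀‖ ⊆ ball (0:ℂ) 1 := by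
    intro w hw
    rw [mem_ball, dist_zero_right]
    exact lt_of_le_of_lt (mem_closedBall_zero_iff.1 hw) hr1
  exact ((hucauchy ‖x₀‖ (norm_nonneg _) hr1).tendstoUniformlyOn_of_tendsto
    (fun x hx => hgt x (hsub1 hx))).mono hKsub
lemma exists_eq_of_norm_center_lt {f : ℂ → ℂ} {z₀ q' : ℂ} {ρ m : ℝ} (hρ : 0 < ρ)
    (hf : DifferentiableOn ℂ f (ball z₀ ρ)) (hfc : ContinuousOn f (closedBall z₀ ρ))
    (hcen : ‖f z₀ - q'‖ < m) (hsph : ∀ z ∈ sphere z₀ ρ, m ≤ ‖f z - q'‖) :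
    ∃ z ∈ closedBall z₀ ρ, f z = q' := by
  by_contra hcon
  push_neg at hcon
  have hne : ∀ z ∈ closedBall z₀ ρ, f z - q' ≠ 0 := fun z hz => sub_ne_zero.2 (hcon z hz)
  set h1 : ℂ → ℂ := fun z => (f z - q')⁻¹ with hh
  have hdiff : DiffContOnCl ℂ h1 (ball z₀ ρ) := by
    refine ⟨?_, ?_⟩
    · exact (hf.sub (differentiableOn_const _)).inv
        (fun z hz => hne z (ball_subset_closedBall hz))
    · rw [closure_ball z₀ hρ.ne']
      exact (hfc.sub continuousOn_const).inv₀ (fun z hz => hne z hz)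
  obtain ⟨w, hwf, hwmax⟩ := Complex.exists_mem_frontier_isMaxOn_norm isBounded_ball
    (nonempty_ball.2 hρ) hdiff
  rw [frontier_ball z₀ hρ.ne'] at hwf
  have hz₀cl : z₀ ∈ closure (ball z₀ ρ) := subset_closure (mem_ball_self hρ)
  have hle : ‖h1 z₀‖ ≤ ‖h1 w‖ := hwmax hz₀cl
  have hm0 : 0 < m := lt_of_le_of_lt (norm_nonneg _) hcen
  have hc0 : 0 < ‖f z₀ - q'‖ := norm_pos_iff.2 (hne z₀ (mem_closedBall_self hρ.le))
  have h2 : ‖h1 w‖ ≤ m⁻¹ := by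
    rw [hh]; simp only [norm_inv]
    exact inv_anti₀ hm0 (hsph w hwf)
  have h3 : m⁻¹ < ‖h1 z₀‖ := by
    rw [hh]; simp only [norm_inv]
    exact inv_strictAnti₀ hc0 hcen
  linarith
end EtaProof

open EtaProof in
/-- Theorems 1.9 and 1.4 combined, for the trivial single-leaf foliation of a
bounded plane domain `U`: if the bounded connected open sets `W n ⊆ U` converge
to the bounded connected open set `W₀ ⊆ U` in the Hausdorff sense, then
`η_{W n} p → η_{W₀} p` for every `p ∈ W₀`. -/
theorem eta_pointwise_convergence_of_hausdorff_convergence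
    (U : Set ℂ) (hUopen : IsOpen U) (hUconn : IsConnected U)
    (hUbdd : Bornology.IsBounded U)
    (W : ℕ → Set ℂ) (W₀ : Set ℂ)
    (hWopen : ∀ n, IsOpen (W n)) (hWconn : ∀ n, IsConnected (W n))
    (hWbdd : ∀ n, Bornology.IsBounded (W n))
    (hWU : ∀ n, W n ⊆ U) (h0 : ∀ n, (0 : ℂ) ∈ W n)
    (hW₀open : IsOpen W₀) (hW₀conn : IsConnected W₀)
    (hW₀bdd : Bornology.IsBounded W₀) (hW₀U : W₀ ⊆ U) (h0W₀ : (0 : ℂ) ∈ W₀)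
    (hcl : Tendsto (fun n => hausdorffDist (closure (W n)) (closure W₀)) atTop (nhds 0))
    (hbd : Tendsto (fun n => hausdorffDist (frontier (W n)) (frontier W₀)) atTop (nhds 0)) :
    ∀ p ∈ W₀, Tendsto (fun n => eta (W n) p) atTop (nhds (eta W₀ p)) := by
  intro p hp
  obtain ⟨R, hRU⟩ := hUbdd.subset_closedBall 0
  have hUball : U ⊆ ball (0:ℂ) (R+1) := fun z hz =>
    mem_ball.2 (lt_of_le_of_lt (mem_closedBall.1 (hRU hz)) (by linarith))
  have hWball : ∀ n, W n ⊆ ball (0:ℂ) (R+1) := fun n => (hWU n).trans hUball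
  have hW₀ball : W₀ ⊆ ball (0:ℂ) (R+1) := hW₀U.trans hUball
  have hWne : ∀ n, (W n).Nonempty := fun n => ⟨0, h0 n⟩
  have hW₀ne : W₀.Nonempty := ⟨0, h0W₀⟩
  have bddn : ∀ n, BddAbove (etaSet (W n) p) := fun n => bddAbove_etaSet (hWball n)
  have bdd₀ : BddAbove (etaSet W₀ p) := bddAbove_etaSet hW₀ball
  have hL0 : 0 ≤ eta W₀ p := eta_nonneg hW₀ball hp
  set L := eta W₀ p with hLdef
  rw [tendsto_order]
  constructor
  · -- lower bound
    intro b hb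
    rcases lt_or_ge b 0 with hb0 | hb0
    · have habs := eventually_compact_subset hWopen hWne hWbdd hW₀ne hW₀open hW₀bdd hcl hbd
        isCompact_singleton (singleton_subset_iff.2 hp)
      filter_upwards [habs] with n hn
      have hpn : p ∈ W n := hn rfl
      calc b < 0 := hb0
        _ ≤ eta (W n) p := by
            rw [eta_eq]; exact le_csSup (bddn n) (zero_mem_etaSet hpn)
    · have hb' : b < sSup (etaSet W₀ p) := by rw [← eta_eq]; exact hb
      obtain ⟨r, hrmem, hbr⟩ := exists_lt_of_lt_csSup ⟨0, zero_mem_etaSet hp⟩ hb'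
      obtain ⟨f, hf, hf0, hmap, hreq⟩ := hrmem
      have hr0 : 0 ≤ r := by rw [hreq]; exact norm_nonneg _
      have hrpos : 0 < r := lt_of_le_of_lt hb0 hbr
      set t := (b + r)/(2*r) with ht
      have ht0 : 0 < t := by positivity
      have ht1 : t < 1 := by rw [ht, div_lt_one (by positivity)]; linarith
      have htreq : t * r = (b + r)/2 := by
        rw [ht, div_mul_eq_mul_div, div_eq_div_iff (by positivity) (by norm_num)]; ring
      have htr : b < t * r := by rw [htreq]; linarith
      have hcb : closedBall (0:ℂ) t ⊆ ball (0:ℂ) 1 := fun w hw =>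
        mem_ball.2 (lt_of_le_of_lt (mem_closedBall.1 hw) ht1)
      have hKcompact : IsCompact (f '' (closedBall 0 t)) :=
        (isCompact_closedBall _ _).image_of_continuousOn (hf.continuousOn.mono hcb)
      have hKW₀ : f '' (closedBall 0 t) ⊆ W₀ := by
        rintro _ ⟨w, hw, rfl⟩; exact hmap w (hcb hw)
      have habs := eventually_compact_subset hWopen hWne hWbdd hW₀ne hW₀open hW₀bdd hcl hbd
        hKcompact hKW₀
      filter_upwards [habs] with n hn
      have htz : ∀ z ∈ ball (0:ℂ) 1, (t:ℂ) * z ∈ closedBall (0:ℂ) t := by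
        intro z hz
        rw [mem_closedBall_zero_iff, norm_mul, Complex.norm_real, Real.norm_eq_abs,
          abs_of_pos ht0]
        rw [mem_ball, dist_zero_right] at hz
        calc t * ‖z‖ ≤ t * 1 := by
              apply mul_le_mul_of_nonneg_left hz.le ht0.le
          _ = t := mul_one t
      have hmem : t * r ∈ etaSet (W n) p := by
        refine ⟨fun z => f ((t:ℂ) * z), ?_, ?_, ?_, ?_⟩
        · intro z hz
          have hz' : (t:ℂ) * z ∈ ball (0:ℂ) 1 := hcb (htz z hz)
          exact ((hf.differentiableAt (isOpen_ball.mem_nhds hz')).comp z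
            (differentiableAt_id.const_mul _)).differentiableWithinAt
        · simp only [mul_zero]; exact hf0
        · intro z hz
          exact hn ⟨_, htz z hz, rfl⟩
        · have hdg : deriv (fun z => f ((t:ℂ) * z)) 0 = deriv f 0 * (t:ℂ) := by
            have h1 : HasDerivAt (fun z : ℂ => (t:ℂ) * z) (t:ℂ) 0 := by
              simpa using (hasDerivAt_id (0:ℂ)).const_mul (t:ℂ)
            have h2 : HasDerivAt f (deriv f 0) ((t:ℂ) * 0) := by
              rw [mul_zero]
              exact (hf.differentiableAt
                (isOpen_ball.mem_nhds (mem_ball_self one_pos))).hasDerivAt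
            exact (h2.comp 0 h1).deriv
          rw [hdg, norm_mul, Complex.norm_real, Real.norm_eq_abs, abs_of_pos ht0, ← hreq, mul_comm]
      calc b < t * r := htr
        _ ≤ eta (W n) p := by rw [eta_eq]; exact le_csSup (bddn n) hmem
  · -- upper bound
    intro b hbgt
    by_contra hnot
    rw [Filter.not_eventually] at hnot
    have hfreq : ∃ᶠ n in atTop, b ≤ eta (W n) p := hnot.mono fun n h => not_lt.1 h
    obtain ⟨φ, hφmono, hφprop⟩ := extraction_of_frequently_atTop hfreq
    have hbpos : 0 < b := lt_of_le_of_lt hL0 hbgt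
    have hmid : L < (L+b)/2 := by linarith
    have hmidb : (L+b)/2 < b := by linarith
    have hnonempty : ∀ k, (etaSet (W (φ k)) p).Nonempty := by
      intro k
      by_contra hne
      rw [not_nonempty_iff_eq_empty] at hne
      have h1 : eta (W (φ k)) p = 0 := by rw [eta_eq, hne, Real.sSup_empty]
      have h2 := hφprop k
      rw [h1] at h2
      linarith
    have hsel : ∀ k, ∃ f : ℂ → ℂ, DifferentiableOn ℂ f (ball (0 : ℂ) 1) ∧ f 0 = p ∧
        (∀ z ∈ ball (0 : ℂ) 1, f z ∈ W (φ k)) ∧ (L+b)/2 < ‖deriv f 0‖ := by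
      intro k
      have hlt : (L+b)/2 < sSup (etaSet (W (φ k)) p) := by
        rw [← eta_eq]; exact lt_of_lt_of_le hmidb (hφprop k)
      obtain ⟨r, hrmem, hlt'⟩ := exists_lt_of_lt_csSup (hnonempty k) hlt
      obtain ⟨f, h1, h2, h3, h4⟩ := hrmem
      exact ⟨f, h1, h2, h3, h4 ▸ hlt'⟩
    choose G hG1 hG2 hG3 hG4 using hsel
    have hGbound : ∀ k, ∀ z ∈ ball (0:ℂ) 1, ‖G k z‖ ≤ R := by
      intro k z hz
      exact mem_closedBall_zero_iff.1 (hRU (hWU (φ k) (hG3 k z hz)))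
    obtain ⟨g, ψ, hψ, hTLU⟩ := montel hG1 hGbound
    have hGdiffev : ∀ᶠ k in atTop, DifferentiableOn ℂ (G (ψ k)) (ball (0:ℂ) 1) :=
      Eventually.of_forall fun k => hG1 (ψ k)
    have hgd : DifferentiableOn ℂ g (ball 0 1) := hTLU.differentiableOn hGdiffev isOpen_ball
    have hg0 : g 0 = p := by
      have h1 : Tendsto (fun k => G (ψ k) 0) atTop (𝓝 (g 0)) :=
        hTLU.tendsto_at (mem_ball_self one_pos)
      have h2 : (fun k => G (ψ k) 0) = fun _ => p := funext fun k => hG2 (ψ k)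
      rw [h2] at h1
      exact tendsto_nhds_unique h1 tendsto_const_nhds
    have hderiv : Tendsto (fun k => deriv (G (ψ k)) 0) atTop (𝓝 (deriv g 0)) :=
      (hTLU.deriv hGdiffev isOpen_ball).tendsto_at (mem_ball_self one_pos)
    have hgderiv : (L+b)/2 ≤ ‖deriv g 0‖ := by
      have hnorm : Tendsto (fun k => ‖deriv (G (ψ k)) 0‖) atTop
          (𝓝 (‖deriv g 0‖)) :=
        (continuous_norm.tendsto _).comp hderiv
      exact ge_of_tendsto hnorm (Eventually.of_forall fun k => (hG4 (ψ k)).le)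
    have hgpos : 0 < ‖deriv g 0‖ := lt_of_lt_of_le (by linarith) hgderiv
    have hsub : Tendsto (fun k => φ (ψ k)) atTop atTop := (hφmono.comp hψ).tendsto_atTop
    have hcl' : Tendsto (fun k => hausdorffDist (closure (W (φ (ψ k)))) (closure W₀))
        atTop (𝓝 0) := hcl.comp hsub
    have hbd' : Tendsto (fun k => hausdorffDist (frontier (W (φ (ψ k)))) (frontier W₀))
        atTop (𝓝 0) := hbd.comp hsub
    have hW₀clne : (closure W₀).Nonempty := hW₀ne.mono subset_closure
    have hmapscl : ∀ z ∈ ball (0:ℂ) 1, g z ∈ closure W₀ := by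
      intro z hz
      have hptw : Tendsto (fun k => G (ψ k) z) atTop (𝓝 (g z)) := hTLU.tendsto_at hz
      have hinf : Tendsto (fun k => infDist (G (ψ k) z) (closure W₀)) atTop
          (𝓝 (infDist (g z) (closure W₀))) :=
        ((continuous_infDist_pt (closure W₀)).tendsto _).comp hptw
      have hbound2 : ∀ k, infDist (G (ψ k) z) (closure W₀) ≤
          hausdorffDist (closure (W (φ (ψ k)))) (closure W₀) := by
        intro k
        have hfin : EMetric.hausdorffEdist (closure (W (φ (ψ k)))) (closure W₀) ≠ ⊤ :=
          hausdorffEdist_ne_top_of_nonempty_of_bounded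
            ((hWne _).mono subset_closure) hW₀clne (hWbdd _).closure hW₀bdd.closure
        exact infDist_le_hausdorffDist_of_mem (subset_closure (hG3 (ψ k) z hz)) hfin
      have hle0 : infDist (g z) (closure W₀) ≤ 0 :=
        le_of_tendsto_of_tendsto' hinf hcl' hbound2
      have hge0 : 0 ≤ infDist (g z) (closure W₀) := infDist_nonneg
      rw [isClosed_closure.mem_iff_infDist_zero hW₀clne]
      linarith
    have hnofront : ∀ z₀ ∈ ball (0:ℂ) 1, g z₀ ∉ frontier W₀ := by
      intro z₀ hz₀ hqf
      have hgan : AnalyticOnNhd ℂ g (ball 0 1) := hgd.analyticOnNhd isOpen_ball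
      have hA : AnalyticAt ℂ (fun z => g z - g z₀) z₀ := (hgan z₀ hz₀).sub analyticAt_const
      rcases hA.eventually_eq_zero_or_eventually_ne_zero with hzero | hne
      · have hevq : g =ᶠ[𝓝 z₀] fun _ => g z₀ := hzero.mono fun z h => by
          simpa [sub_eq_zero] using h
        have heq : EqOn g (fun _ => g z₀) (ball (0:ℂ) 1) :=
          hgan.eqOn_of_preconnected_of_eventuallyEq analyticOnNhd_const
            (convex_ball (0:ℂ) 1).isPreconnected hz₀ hevq
        have hev0 : g =ᶠ[𝓝 (0:ℂ)] fun _ => g z₀ :=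
          Filter.eventuallyEq_of_mem (isOpen_ball.mem_nhds (mem_ball_self one_pos)) heq
        have hder0 : deriv g 0 = 0 := by rw [hev0.deriv_eq]; simp
        rw [hder0] at hgpos
        simp at hgpos
      · rw [eventually_nhdsWithin_iff, Metric.eventually_nhds_iff] at hne
        obtain ⟨ρ₁, hρ₁, hρball⟩ := hne
        obtain ⟨ρ₂, hρ₂, hρ₂sub⟩ := Metric.mem_nhds_iff.1 (isOpen_ball.mem_nhds hz₀)
        set ρ := min ρ₁ ρ₂ / 2 with hρdef
        have hρpos : 0 < ρ := by positivity
        have hρlt₁ : ρ < ρ₁ := by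
          have := min_le_left ρ₁ ρ₂; rw [hρdef]; linarith
        have hρlt₂ : ρ < ρ₂ := by
          have := min_le_right ρ₁ ρ₂; rw [hρdef]; linarith
        have hρsub : closedBall z₀ ρ ⊆ ball (0:ℂ) 1 := fun w hw =>
          hρ₂sub (mem_ball.2 (lt_of_le_of_lt (mem_closedBall.1 hw) hρlt₂))
        have hsphne : ∀ z ∈ sphere z₀ ρ, g z ≠ g z₀ := by
          intro z hz
          have hd : dist z z₀ = ρ := mem_sphere.1 hz
          have h1 : dist z z₀ < ρ₁ := by rw [hd]; exact hρlt₁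
          have h2 : z ∈ ({z₀}ᶜ : Set ℂ) := by
            simp only [mem_compl_iff, mem_singleton_iff]
            intro hzz; rw [hzz, dist_self] at hd; exact hρpos.ne hd
          have := hρball h1 h2
          exact fun hc => this (sub_eq_zero.2 hc)
        have hsphn : (sphere z₀ ρ).Nonempty := NormedSpace.sphere_nonempty.2 hρpos.le
        have hcont : ContinuousOn (fun z => ‖g z - g z₀‖) (sphere z₀ ρ) :=
          ((hgd.continuousOn.mono (sphere_subset_closedBall.trans hρsub)).sub
            continuousOn_const).norm
        obtain ⟨zm, hzm, hzmin⟩ := (isCompact_sphere z₀ ρ).exists_isMinOn hsphn hcont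
        set m := ‖g zm - g z₀‖ with hm
        have hm0 : 0 < m := norm_pos_iff.2 (sub_ne_zero.2 (hsphne zm hzm))
        have hsphlb : ∀ z ∈ sphere z₀ ρ, m ≤ ‖g z - g z₀‖ := fun z hz => hzmin hz
        have hTU : TendstoUniformlyOn (fun k => G (ψ k)) g atTop (closedBall z₀ ρ) :=
          (tendstoLocallyUniformlyOn_iff_forall_isCompact isOpen_ball).1 hTLU _ hρsub
            (isCompact_closedBall _ _)
        rw [Metric.tendstoUniformlyOn_iff] at hTU
        have hev1 := hTU (m/4) (by positivity)
        have hev2 := hbd'.eventually_lt_const (show (0:ℝ) < m/8 by positivity)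
        obtain ⟨k, hk1, hk2⟩ := (hev1.and hev2).exists
        have hfrkne : (frontier (W (φ (ψ k)))).Nonempty :=
          frontier_nonempty (hWne _) (hWbdd _)
        have hfr₀ne : (frontier W₀).Nonempty := frontier_nonempty hW₀ne hW₀bdd
        have hfin : EMetric.hausdorffEdist (frontier (W (φ (ψ k)))) (frontier W₀) ≠ ⊤ :=
          hausdorffEdist_ne_top_of_nonempty_of_bounded hfrkne hfr₀ne
            ((hWbdd _).closure.subset frontier_subset_closure)
            (hW₀bdd.closure.subset frontier_subset_closure)
        obtain ⟨q', hq', hqq'⟩ := exists_dist_lt_of_hausdorffDist_lt' hqf hk2 hfin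
        have hGdiff : DifferentiableOn ℂ (G (ψ k)) (ball z₀ ρ) :=
          (hG1 (ψ k)).mono (ball_subset_closedBall.trans hρsub)
        have hGcont : ContinuousOn (G (ψ k)) (closedBall z₀ ρ) :=
          (hG1 (ψ k)).continuousOn.mono hρsub
        have hcen : ‖G (ψ k) z₀ - q'‖ < m/2 := by
          have e1 : dist (g z₀) (G (ψ k) z₀) < m/4 := hk1 z₀ (mem_closedBall_self hρpos.le)
          have e2 : ‖q' - g z₀‖ < m/8 := by rw [← dist_eq_norm]; exact hqq'
          calc ‖G (ψ k) z₀ - q'‖ = ‖(G (ψ k) z₀ - g z₀) - (q' - g z₀)‖ := by ring_nf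
            _ ≤ ‖G (ψ k) z₀ - g z₀‖ + ‖q' - g z₀‖ := norm_sub_le _ _
            _ < m/4 + m/8 := by
                apply add_lt_add _ e2
                rw [← dist_eq_norm, dist_comm]; exact e1
            _ < m/2 := by linarith
        have hsph2 : ∀ z ∈ sphere z₀ ρ, m/2 ≤ ‖G (ψ k) z - q'‖ := by
          intro z hz
          have e1 : dist (g z) (G (ψ k) z) < m/4 := hk1 z (sphere_subset_closedBall hz)
          have e2 : m ≤ ‖g z - g z₀‖ := hsphlb z hz
          have e3 : ‖q' - g z₀‖ < m/8 := by rw [← dist_eq_norm]; exact hqq'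
          have e4 : ‖g z - G (ψ k) z‖ < m/4 := by rw [← dist_eq_norm]; exact e1
          have e5 : ‖g z - g z₀‖ ≤ ‖g z - G (ψ k) z‖ + ‖G (ψ k) z - q'‖ + ‖q' - g z₀‖ := by
            calc ‖g z - g z₀‖ = ‖(g z - G (ψ k) z) + (G (ψ k) z - q') + (q' - g z₀)‖ := by
                  ring_nf
              _ ≤ ‖(g z - G (ψ k) z) + (G (ψ k) z - q')‖ + ‖q' - g z₀‖ := norm_add_le _ _
              _ ≤ ‖g z - G (ψ k) z‖ + ‖G (ψ k) z - q'‖ + ‖q' - g z₀‖ := by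
                  gcongr
                  exact norm_add_le _ _
          linarith
        obtain ⟨z, hzmem, hzeq⟩ := exists_eq_of_norm_center_lt hρpos hGdiff hGcont hcen hsph2
        have hq'W : q' ∈ W (φ (ψ k)) := hzeq ▸ hG3 (ψ k) z (hρsub hzmem)
        rw [(hWopen (φ (ψ k))).frontier_eq] at hq'
        exact hq'.2 hq'W
    have hmaps : ∀ z ∈ ball (0:ℂ) 1, g z ∈ W₀ := by
      intro z hz
      by_contra hzW
      exact hnofront z hz (by rw [hW₀open.frontier_eq]; exact ⟨hmapscl z hz, hzW⟩)
    have hmemW₀ : ‖deriv g 0‖ ∈ etaSet W₀ p := ⟨g, hgd, hg0, hmaps, rfl⟩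
    have hfinal : ‖deriv g 0‖ ≤ L := by
      rw [hLdef, eta_eq]; exact le_csSup bdd₀ hmemW₀
    linarith
end

section
/- Let U ⊆ ℂ be a bounded connected open set, and let W_n, W ⊆ U be bounded connected open sets with 0 ∈ W_n for all n and 0 ∈ W. Assume d_H(closure(W_n), closure(W)) → 0 and d_H(∂W_n, ∂W) → 0 (Hausdorff distances), and that the function p ↦ η_W(p) is continuous on W. Then η_{W_n} → η_W uniformly on every compact subset of W. (This combines Theorem 1.9 and Theorem 1.6 of the paper, in the case of the trivial single-leaf nonsingular foliation of U.) -/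
set_option synthInstance.maxHeartbeats 1000000
set_option maxHeartbeats 1000000

open Filter Metric Topology Set

namespace EtaAux

def etaSet (Ω : Set ℂ) (p : ℂ) : Set ℝ :=
  {r : ℝ | ∃ f : ℂ → ℂ, DifferentiableOn ℂ f (ball (0 : ℂ) 1) ∧ f 0 = p ∧
    (∀ z ∈ ball (0 : ℂ) 1, f z ∈ Ω) ∧ r = ‖deriv f 0‖}

lemma eta_eq (Ω : Set ℂ) (p : ℂ) : eta Ω p = sSup (etaSet Ω p) := rfl

lemma mem_etaSet_nonneg {Ω : Set ℂ} {p : ℂ} {r : ℝ} (h : r ∈ etaSet Ω p) : 0 ≤ r := by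
  obtain ⟨f, -, -, -, rfl⟩ := h
  exact norm_nonneg _

lemma etaSet_le {Ω : Set ℂ} {R : ℝ} (hΩ : Ω ⊆ ball (0:ℂ) R) {p : ℂ} {r : ℝ}
    (h : r ∈ etaSet Ω p) : r ≤ 2 * R := by
  obtain ⟨f, hf, hf0, hmem, rfl⟩ := h
  have h0 : (0:ℂ) ∈ ball (0:ℂ) 1 := by simp
  have hmaps : MapsTo f (ball (0:ℂ) 1) (ball (f 0) (2*R)) := by
    intro z hz
    have h1 : f z ∈ ball (0:ℂ) R := hΩ (hmem z hz)
    have h2 : f 0 ∈ ball (0:ℂ) R := hΩ (hmem 0 h0)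
    rw [mem_ball] at h1 h2 ⊢
    calc dist (f z) (f 0) ≤ dist (f z) 0 + dist 0 (f 0) := dist_triangle _ _ _
      _ < R + R := by rw [dist_comm (0:ℂ) (f 0)]; exact add_lt_add h1 h2
      _ = 2 * R := by ring
  have := Complex.norm_deriv_le_div_of_mapsTo_ball hf (hmaps.mono_right ball_subset_closedBall) one_pos
  simpa using this

lemma etaSet_bddAbove {Ω : Set ℂ} {R : ℝ} (hΩ : Ω ⊆ ball (0:ℂ) R) (p : ℂ) :
    BddAbove (etaSet Ω p) :=
  ⟨2 * R, fun _ hr => etaSet_le hΩ hr⟩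

lemma eta_nonneg {Ω : Set ℂ} {R : ℝ} (hΩ : Ω ⊆ ball (0:ℂ) R) (p : ℂ) : 0 ≤ eta Ω p := by
  rcases eq_empty_or_nonempty (etaSet Ω p) with h | ⟨r, hr⟩
  · rw [eta_eq, h, Real.sSup_empty]
  · exact (mem_etaSet_nonneg hr).trans (le_csSup (etaSet_bddAbove hΩ p) hr)

lemma eta_le {Ω : Set ℂ} {R : ℝ} (hΩ : Ω ⊆ ball (0:ℂ) R) (hR : 0 ≤ R) (p : ℂ) :
    eta Ω p ≤ 2 * R := by
  rcases eq_empty_or_nonempty (etaSet Ω p) with h | hn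
  · rw [eta_eq, h, Real.sSup_empty]; positivity
  · exact csSup_le hn fun _ hr => etaSet_le hΩ hr

lemma le_eta {Ω : Set ℂ} {R : ℝ} (hΩ : Ω ⊆ ball (0:ℂ) R) {f : ℂ → ℂ} {p : ℂ}
    (hf : DifferentiableOn ℂ f (ball (0:ℂ) 1)) (h0 : f 0 = p)
    (hm : ∀ z ∈ ball (0:ℂ) 1, f z ∈ Ω) : ‖deriv f 0‖ ≤ eta Ω p :=
  le_csSup (etaSet_bddAbove hΩ p) ⟨f, hf, h0, hm, rfl⟩

lemma exists_of_lt_eta {Ω : Set ℂ} {p : ℂ} {c : ℝ} (hc : 0 ≤ c) (h : c < eta Ω p) :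
    ∃ f : ℂ → ℂ, DifferentiableOn ℂ f (ball (0:ℂ) 1) ∧ f 0 = p ∧
      (∀ z ∈ ball (0:ℂ) 1, f z ∈ Ω) ∧ c < ‖deriv f 0‖ := by
  have hne : (etaSet Ω p).Nonempty := by
    by_contra hempty
    rw [not_nonempty_iff_eq_empty] at hempty
    rw [eta_eq, hempty, Real.sSup_empty] at h
    linarith
  obtain ⟨r, hr, hcr⟩ := exists_lt_of_lt_csSup hne h
  obtain ⟨f, hf, h0, hm, rfl⟩ := hr
  exact ⟨f, hf, h0, hm, hcr⟩

lemma subset_of_disjoint_frontier {S t : Set ℂ} (hS : IsPreconnected S) (ht : IsOpen t)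
    (hd : ∀ y ∈ S, y ∉ frontier t) (hne : (S ∩ t).Nonempty) : S ⊆ t := by
  refine hS.subset_left_of_subset_union (v := (closure t)ᶜ) ht
    isClosed_closure.isOpen_compl (disjoint_compl_right.mono_left subset_closure) ?_ hne
  intro y hy
  by_cases hyc : y ∈ closure t
  · left
    by_contra hyt
    exact hd y hy ⟨hyc, by rwa [ht.interior_eq]⟩
  · right; exact hyc



lemma ne_univ_of_isBounded {s : Set ℂ} (h : Bornology.IsBounded s) : s ≠ univ := by
  rintro rfl
  obtain ⟨r, hr⟩ := h.subset_ball 0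
  have : ((max r 0 + 1 : ℝ) : ℂ) ∈ ball (0:ℂ) r := hr (mem_univ _)
  rw [mem_ball, dist_zero_right, Complex.norm_real, Real.norm_eq_abs,
    abs_of_nonneg (by positivity)] at this
  have := le_max_left r 0
  linarith

lemma frontier_nonempty {s : Set ℂ} (hne : s.Nonempty) (h : Bornology.IsBounded s) :
    (frontier s).Nonempty :=
  nonempty_frontier_iff.mpr ⟨hne, ne_univ_of_isBounded h⟩

lemma dist_le_of_mem_segment {x y z : ℂ} (h : y ∈ segment ℝ x z) : dist y x ≤ dist z x := by
  obtain ⟨a, b, ha, hb, hab, rfl⟩ := h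
  have hxy : a • x + b • z - x = b • (z - x) := by
    have : a = 1 - b := by linarith
    subst this
    module
  rw [dist_eq_norm, hxy, norm_smul, Real.norm_eq_abs, abs_of_nonneg hb, dist_eq_norm]
  nlinarith [norm_nonneg (z - x)]

/-- Key geometric inclusion: if `S` is compact with `thickening ρ S ⊆ W₀`, and `Wn` is an
open set whose frontier and closure are Hausdorff-close to those of `W₀`, then the
`ρ/4`-neighbourhood of `S` is contained in `Wn`. -/
lemma key_incl {W₀ Wn : Set ℂ} (hW₀open : IsOpen W₀) (hWnopen : IsOpen Wn)
    (hWnne : Wn.Nonempty) (hWnbdd : Bornology.IsBounded Wn)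
    (hW₀ne : W₀.Nonempty) (hW₀bdd : Bornology.IsBounded W₀)
    {S : Set ℂ} (hSne : S.Nonempty) (hS : IsCompact S) {ρ : ℝ} (hρ : 0 < ρ)
    (hthick : thickening ρ S ⊆ W₀)
    (hfr : hausdorffDist (frontier Wn) (frontier W₀) < ρ/8)
    (hcln : hausdorffDist (closure W₀) (closure Wn) < ρ/8) :
    cthickening (ρ/4) S ⊆ Wn := by
  have hfinfr : EMetric.hausdorffEdist (frontier Wn) (frontier W₀) ≠ ⊤ :=
    Metric.hausdorffEdist_ne_top_of_nonempty_of_bounded (frontier_nonempty hWnne hWnbdd)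
      (frontier_nonempty hW₀ne hW₀bdd) (hWnbdd.closure.subset frontier_subset_closure)
      (hW₀bdd.closure.subset frontier_subset_closure)
  have hfincl : EMetric.hausdorffEdist (closure W₀) (closure Wn) ≠ ⊤ :=
    Metric.hausdorffEdist_ne_top_of_nonempty_of_bounded hW₀ne.closure hWnne.closure
      hW₀bdd.closure hWnbdd.closure
  intro x hx
  -- find s ∈ S with dist x s < ρ/2
  have hxS : infDist x S ≤ ρ/4 := by
    rw [mem_cthickening_iff] at hx
    have := ENNReal.toReal_mono (by simp) hx
    rwa [ENNReal.toReal_ofReal (by positivity)] at this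
  have hxS2 : infDist x S < ρ/2 := lt_of_le_of_lt hxS (by linarith)
  obtain ⟨s, hsS, hxs⟩ := (infDist_lt_iff hSne).mp hxS2
  -- points of S are ρ-deep inside W₀
  have hdeep : ∀ y, y ∉ W₀ → ∀ t ∈ S, ρ ≤ dist t y := by
    intro y hy t htS
    by_contra hlt
    push_neg at hlt
    exact hy (hthick (ball_subset_thickening htS ρ (by rwa [mem_ball, dist_comm])))
  -- x is far from W₀ᶜ
  have hxfar : ∀ y, y ∉ W₀ → ρ/2 ≤ dist x y := by
    intro y hy
    have h1 := hdeep y hy s hsS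
    have h2 := dist_triangle s x y
    rw [dist_comm s x] at h2
    linarith
  have hxW₀ : x ∈ W₀ := by
    by_contra hxW
    have := hxfar x hxW
    simp at this
    linarith
  -- suppose x ∉ Wn, derive a contradiction
  by_contra hxWn
  obtain ⟨w, hw, hxw⟩ := exists_dist_lt_of_hausdorffDist_lt (subset_closure hxW₀) hcln hfincl
  have : ∃ w' ∈ Wn, dist x w' < ρ/8 := by
    obtain ⟨w', hw', hww'⟩ := Metric.mem_closure_iff.mp hw (ρ/8 - dist x w) (by linarith)
    exact ⟨w', hw', by have := dist_triangle x w w'; linarith⟩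
  obtain ⟨w', hw'Wn, hxw'⟩ := this
  -- the segment from x to w' must meet the frontier of Wn
  have hseg : ∃ y ∈ segment ℝ x w', y ∈ frontier Wn := by
    by_contra hno
    push_neg at hno
    have := subset_of_disjoint_frontier (convex_segment x w').isPreconnected hWnopen hno
      ⟨w', right_mem_segment ℝ x w', hw'Wn⟩
    exact hxWn (this (left_mem_segment ℝ x w'))
  obtain ⟨y, hyseg, hyfr⟩ := hseg
  have hxy : dist y x ≤ dist w' x := dist_le_of_mem_segment hyseg
  -- y is near the frontier of W₀
  obtain ⟨y', hy'fr, hyy'⟩ := exists_dist_lt_of_hausdorffDist_lt hyfr hfr hfinfr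
  have hy'W₀ : y' ∉ W₀ := by
    intro hmem
    rw [hW₀open.frontier_eq] at hy'fr
    exact hy'fr.2 hmem
  have := hxfar y' hy'W₀
  have h1 := dist_triangle x y y'
  have h2 : dist y x = dist x y := dist_comm y x
  have h3 : dist w' x = dist x w' := dist_comm w' x
  linarith




lemma montel {R C : ℝ} (hR : 1 < R) (g : ℕ → ℂ → ℂ)
    (hdiff : ∀ k, DifferentiableOn ℂ (g k) (ball (0:ℂ) R))
    (hbound : ∀ k, ∀ z ∈ ball (0:ℂ) R, ‖g k z‖ ≤ C) :
    ∃ (φ : ℕ → ℕ) (G : ℂ → ℂ), StrictMono φ ∧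
      TendstoUniformlyOn (fun k => g (φ k)) G atTop (closedBall (0:ℂ) ((1+R)/2)) := by
  classical
  set r : ℝ := (1+R)/2 with hrdef
  have hr1 : 1 ≤ r := by rw [hrdef]; linarith
  have hrR : r < R := by rw [hrdef]; linarith
  have hRr : 0 < R - r := by linarith
  have hC0 : 0 ≤ C :=
    le_trans (norm_nonneg _) (hbound 0 0 (by simp [mem_ball]; linarith))
  set L : ℝ := (2*C+1)/(R - r) with hLdef
  have hL0 : 0 < L := by positivity
  have hsub : closedBall (0:ℂ) r ⊆ ball (0:ℂ) R := closedBall_subset_ball hrR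
  have lip : ∀ k, ∀ x ∈ closedBall (0:ℂ) r, ∀ y ∈ closedBall (0:ℂ) r,
      dist (g k x) (g k y) ≤ L * dist x y := by
    intro k x hx y hy
    have hxR : x ∈ ball (0:ℂ) R := hsub hx
    have hyR : y ∈ ball (0:ℂ) R := hsub hy
    have hby := hbound k y hyR
    have hball : ball y (R - r) ⊆ ball (0:ℂ) R := by
      intro w hw
      rw [mem_ball] at hw ⊢
      rw [mem_closedBall] at hy
      have h1 := dist_triangle w y (0:ℂ)
      linarith
    by_cases hcase : dist x y < R - r
    · have hmaps : MapsTo (g k) (ball y (R - r)) (ball (g k y) (2*C+1)) := by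
        intro w hw
        have hbw := hbound k w (hball hw)
        rw [mem_ball, dist_eq_norm]
        calc ‖g k w - g k y‖ ≤ ‖g k w‖ + ‖g k y‖ := norm_sub_le _ _
          _ ≤ C + C := by
              exact add_le_add hbw hby
          _ < 2*C+1 := by linarith
      exact Complex.dist_le_div_mul_dist_of_mapsTo_ball ((hdiff k).mono hball) (hmaps.mono_right ball_subset_closedBall)
        (by rwa [mem_ball])
    · push_neg at hcase
      have hgd : dist (g k x) (g k y) ≤ 2*C := by
        have hbx := hbound k x hxR
        rw [dist_eq_norm]
        calc ‖g k x - g k y‖ ≤ ‖g k x‖ + ‖g k y‖ := norm_sub_le _ _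
          _ ≤ C + C := by
              exact add_le_add hbx hby
          _ = 2*C := by ring
      have heq : L * (R - r) = 2*C+1 := by
        rw [hLdef]; field_simp
      have : L * (R - r) ≤ L * dist x y :=
        mul_le_mul_of_nonneg_left hcase (le_of_lt hL0)
      linarith
  haveI : CompactSpace (closedBall (0:ℂ) r) :=
    isCompact_iff_compactSpace.mp (isCompact_closedBall _ _)
  have hcont : ∀ k, Continuous fun x : closedBall (0:ℂ) r => g k ↑x :=
    fun k => ((hdiff k).continuousOn.mono hsub).restrict
  let F : ℕ → BoundedContinuousFunction (closedBall (0:ℂ) r) ℂ := fun k =>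
    BoundedContinuousFunction.mkOfCompact ⟨_, hcont k⟩
  have hFA : IsCompact (closure (Set.range F)) := by
    apply BoundedContinuousFunction.arzela_ascoli (closedBall (0:ℂ) C)
      (isCompact_closedBall _ _)
    · rintro f x ⟨k, rfl⟩
      show g k ↑x ∈ closedBall (0:ℂ) C
      rw [mem_closedBall, dist_zero_right]
      exact hbound k ↑x (hsub x.2)
    · apply Metric.equicontinuous_of_continuity_modulus (fun t => L * t)
      · have : Tendsto (fun t : ℝ => L * t) (𝓝 0) (𝓝 (L * 0)) :=
          (continuous_const.mul continuous_id).tendsto 0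
        simpa using this
      · rintro x y ⟨f, hf⟩
        obtain ⟨k, rfl⟩ := hf
        show dist (g k ↑x) (g k ↑y) ≤ L * dist x y
        rw [Subtype.dist_eq]
        exact lip k ↑x x.2 ↑y y.2
  obtain ⟨Flim, hFlimmem, φ, hφ, hFconv⟩ :=
    hFA.tendsto_subseq (fun k => subset_closure (mem_range_self (f := F) k))
  have hunif : TendstoUniformly (fun j (x : closedBall (0:ℂ) r) => g (φ j) ↑x) (⇑Flim) atTop :=
    BoundedContinuousFunction.tendsto_iff_tendstoUniformly.mp hFconv
  refine ⟨φ, fun z => if h : z ∈ closedBall (0:ℂ) r then Flim ⟨z, h⟩ else 0, hφ, ?_⟩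
  rw [tendstoUniformlyOn_iff_tendstoUniformly_comp_coe]
  have hGeq : ((fun z => if h : z ∈ closedBall (0:ℂ) r then Flim ⟨z, h⟩ else 0) ∘
      ((↑) : closedBall (0:ℂ) r → ℂ)) = ⇑Flim := by
    funext x
    simp only [Function.comp_apply, dif_pos x.2]
  rw [hGeq]
  exact hunif


lemma claim_lower
    (W : ℕ → Set ℂ) (W₀ : Set ℂ)
    (hWopen : ∀ n, IsOpen (W n)) (hWbdd : ∀ n, Bornology.IsBounded (W n))
    (h0 : ∀ n, (0 : ℂ) ∈ W n)
    (hW₀open : IsOpen W₀) (hW₀bdd : Bornology.IsBounded W₀) (h0W₀ : (0:ℂ) ∈ W₀)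
    {R : ℝ} (hR : 0 < R) (hWR : ∀ n, W n ⊆ ball (0:ℂ) R) (hW₀R : W₀ ⊆ ball (0:ℂ) R)
    (hcl : Tendsto (fun n => hausdorffDist (closure (W n)) (closure W₀)) atTop (nhds 0))
    (hbd : Tendsto (fun n => hausdorffDist (frontier (W n)) (frontier W₀)) atTop (nhds 0))
    (hcont : ContinuousOn (eta W₀) W₀)
    {K : Set ℂ} (hK : IsCompact K) (hKW₀ : K ⊆ W₀)
    {ε : ℝ} (hε : 0 < ε) :
    ∀ᶠ n in atTop, ∀ p ∈ K, eta W₀ p - eta (W n) p < ε := by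
  by_contra hcon
  rw [Filter.not_eventually] at hcon
  have hfreq : ∃ᶠ n in atTop, ∃ p ∈ K, ε ≤ eta W₀ p - eta (W n) p := by
    apply hcon.mono
    intro n hn
    push_neg at hn
    exact hn
  obtain ⟨φ, hφ, hP⟩ := extraction_of_frequently_atTop hfreq
  choose p hpK hpge using hP
  obtain ⟨plim, hplimK, ψ, hψ, hpconv⟩ := hK.tendsto_subseq hpK
  set n : ℕ → ℕ := φ ∘ ψ with hndef
  have hnmono : StrictMono n := hφ.comp hψ
  have hntop : Tendsto n atTop atTop := hnmono.tendsto_atTop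
  have hplimW₀ : plim ∈ W₀ := hKW₀ hplimK
  have hetaconv : Tendsto (fun k => eta W₀ (p (ψ k))) atTop (𝓝 (eta W₀ plim)) :=
    ((hcont.continuousAt (hW₀open.mem_nhds hplimW₀)).tendsto).comp hpconv
  set η₀ := eta W₀ plim with hη₀def
  have hη₀ : ε ≤ η₀ := by
    apply le_of_tendsto_of_tendsto' tendsto_const_nhds hetaconv
    intro k
    have h1 := hpge (ψ k)
    have h2 : 0 ≤ eta (W (φ (ψ k))) (p (ψ k)) := eta_nonneg (hWR _) _
    linarith
  obtain ⟨f, hf, hf0, hfm, hfd⟩ := exists_of_lt_eta (Ω := W₀) (p := plim) (c := η₀ - ε/8)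
    (by linarith) (by linarith)
  have hfd2R : ‖deriv f 0‖ ≤ 2*R :=
    le_trans (le_eta hW₀R hf hf0 hfm) (eta_le hW₀R hR.le _)
  set δ : ℝ := ε/(8*(2*R+1)) with hδdef
  have hδ0 : 0 < δ := by positivity
  have hε2R : ε ≤ 2*R := le_trans hη₀ (eta_le hW₀R hR.le _)
  have hδ1 : δ < 1 := by
    rw [hδdef]
    rw [div_lt_one (by positivity)]
    linarith
  have hδd : δ * ‖deriv f 0‖ ≤ ε/4 := by
    have h1 : δ * ‖deriv f 0‖ ≤ δ * (2*R) :=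
      mul_le_mul_of_nonneg_left hfd2R hδ0.le
    have h2 : δ * (2*R) ≤ ε/4 := by
      rw [hδdef]
      rw [div_mul_eq_mul_div, div_le_div_iff₀ (by positivity) (by norm_num)]
      nlinarith
    linarith
  set c : ℂ := ((1-δ : ℝ) : ℂ) with hcdef
  have habsc : ‖c‖ = 1-δ := by
    rw [hcdef, Complex.norm_real, Real.norm_eq_abs, abs_of_nonneg (by linarith)]
  have hmapsc : ∀ z ∈ closedBall (0:ℂ) 1, c * z ∈ ball (0:ℂ) 1 := by
    intro z hz
    rw [mem_closedBall, dist_zero_right] at hz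
    rw [mem_ball, dist_zero_right, norm_mul, habsc]
    nlinarith [norm_nonneg z]
  set g : ℂ → ℂ := fun z => f (c * z) with hgdef
  have hgcont : ContinuousOn g (closedBall (0:ℂ) 1) := by
    apply (hf.continuousOn.comp (Continuous.continuousOn (by fun_prop)) hmapsc)
  set S : Set ℂ := g '' closedBall (0:ℂ) 1 with hSdef
  have hScomp : IsCompact S := (isCompact_closedBall _ _).image_of_continuousOn hgcont
  have hSne : S.Nonempty := ⟨g 0, mem_image_of_mem g (by simp)⟩
  have hSsub : S ⊆ W₀ := by
    rintro - ⟨z, hz, rfl⟩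
    exact hfm _ (hmapsc z hz)
  obtain ⟨ρ, hρ0, hρthick⟩ := hScomp.exists_thickening_subset_open hW₀open hSsub
  have hev : ∀ᶠ k in atTop, (dist (p (ψ k)) plim < ρ/4 ∧ |eta W₀ (p (ψ k)) - η₀| < ε/8) ∧
      hausdorffDist (frontier (W (n k))) (frontier W₀) < ρ/8 ∧
      hausdorffDist (closure (W (n k))) (closure W₀) < ρ/8 := by
    refine (Filter.Eventually.and (Filter.Eventually.and ?_ ?_) (Filter.Eventually.and ?_ ?_))
    · exact Metric.tendsto_nhds.mp hpconv (ρ/4) (by positivity)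
    · have := Metric.tendsto_nhds.mp hetaconv (ε/8) (by positivity)
      apply this.mono
      intro k hk
      rwa [Real.dist_eq] at hk
    · exact (hbd.comp hntop).eventually (gt_mem_nhds (by positivity))
    · exact (hcl.comp hntop).eventually (gt_mem_nhds (by positivity))
  obtain ⟨k, ⟨hk1, hk2⟩, hk3, hk4⟩ := hev.exists
  have hincl : cthickening (ρ/4) S ⊆ W (n k) := by
    refine key_incl hW₀open (hWopen (n k)) ⟨0, h0 _⟩ (hWbdd _) ⟨0, h0W₀⟩ hW₀bdd hSne hScomp
      hρ0 hρthick hk3 ?_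
    rwa [hausdorffDist_comm]
  set q : ℂ := p (ψ k) with hqdef
  set h : ℂ → ℂ := fun z => g z + (q - plim) with hhdef
  have hgd : DifferentiableOn ℂ g (ball (0:ℂ) 1) := by
    apply DifferentiableOn.comp hf (Differentiable.differentiableOn (by fun_prop))
    intro z hz
    exact hmapsc z (ball_subset_closedBall hz)
  have hhd : DifferentiableOn ℂ h (ball (0:ℂ) 1) := hgd.add_const _
  have hg0 : g 0 = plim := by rw [hgdef]; simp [hf0]
  have hh0 : h 0 = q := by rw [hhdef]; simp [hg0]
  have hhm : ∀ z ∈ ball (0:ℂ) 1, h z ∈ W (n k) := by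
    intro z hz
    apply hincl
    apply mem_cthickening_of_dist_le (h z) (g z) _ _
      (mem_image_of_mem g (ball_subset_closedBall hz))
    rw [hhdef]
    have heq : g z + (q - plim) - g z = q - plim := by ring
    rw [dist_eq_norm, heq, ← dist_eq_norm]
    exact hk1.le
  -- derivative of h at 0
  have hfd0 : HasDerivAt f (deriv f 0) 0 :=
    (hf.differentiableAt (isOpen_ball.mem_nhds (by simp))).hasDerivAt
  have hcd : HasDerivAt (fun z : ℂ => c * z) c 0 := by
    simpa using (hasDerivAt_id (0:ℂ)).const_mul c
  have hgd0 : HasDerivAt g (deriv f 0 * c) 0 := by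
    have := HasDerivAt.comp (0:ℂ) (by simpa only [mul_zero] using hfd0) hcd
    exact this
  have hhd0 : deriv h 0 = deriv f 0 * c := by
    rw [hhdef]
    rw [deriv_add_const]
    exact hgd0.deriv
  have hlow : η₀ - ε/8 - ε/4 ≤ eta (W (n k)) q := by
    have h1 := le_eta (hWR (n k)) hhd hh0 hhm
    rw [hhd0, norm_mul, habsc] at h1
    nlinarith [norm_nonneg (deriv f 0)]
  have hup : eta W₀ q < η₀ + ε/8 := by
    have := abs_sub_lt_iff.mp hk2
    linarith [this.1]
  have hthis : ε ≤ eta W₀ q - eta (W (n k)) q := hpge (ψ k)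
  linarith

lemma claim_upper
    (W : ℕ → Set ℂ) (W₀ : Set ℂ)
    (hWopen : ∀ n, IsOpen (W n)) (hWbdd : ∀ n, Bornology.IsBounded (W n))
    (h0 : ∀ n, (0 : ℂ) ∈ W n)
    (hW₀open : IsOpen W₀) (hW₀bdd : Bornology.IsBounded W₀) (h0W₀ : (0:ℂ) ∈ W₀)
    {R : ℝ} (hR : 0 < R) (hWR : ∀ n, W n ⊆ ball (0:ℂ) R) (hW₀R : W₀ ⊆ ball (0:ℂ) R)
    (hcl : Tendsto (fun n => hausdorffDist (closure (W n)) (closure W₀)) atTop (nhds 0))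
    (hbd : Tendsto (fun n => hausdorffDist (frontier (W n)) (frontier W₀)) atTop (nhds 0))
    (hcont : ContinuousOn (eta W₀) W₀)
    {K : Set ℂ} (hK : IsCompact K) (hKW₀ : K ⊆ W₀)
    {ε : ℝ} (hε : 0 < ε) :
    ∀ᶠ n in atTop, ∀ p ∈ K, eta (W n) p - eta W₀ p < ε := by
  by_contra hcon
  rw [Filter.not_eventually] at hcon
  have hfreq : ∃ᶠ n in atTop, ∃ p ∈ K, ε ≤ eta (W n) p - eta W₀ p := by
    apply hcon.mono
    intro n hn
    push_neg at hn
    exact hn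
  obtain ⟨φ, hφ, hP⟩ := extraction_of_frequently_atTop hfreq
  choose p hpK hpge using hP
  obtain ⟨plim, hplimK, ψ, hψ, hpconv⟩ := hK.tendsto_subseq hpK
  set n : ℕ → ℕ := φ ∘ ψ with hndef
  have hnmono : StrictMono n := hφ.comp hψ
  have hntop : Tendsto n atTop atTop := hnmono.tendsto_atTop
  have hplimW₀ : plim ∈ W₀ := hKW₀ hplimK
  have hetaconv : Tendsto (fun k => eta W₀ (p (ψ k))) atTop (𝓝 (eta W₀ plim)) :=
    ((hcont.continuousAt (hW₀open.mem_nhds hplimW₀)).tendsto).comp hpconv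
  set η₀ := eta W₀ plim with hη₀def
  have hη₀0 : 0 ≤ η₀ := eta_nonneg hW₀R _
  -- choose near-optimal maps into W (n k)
  have hfex : ∀ k, ∃ f : ℂ → ℂ, DifferentiableOn ℂ f (ball (0:ℂ) 1) ∧ f 0 = p (ψ k) ∧
      (∀ z ∈ ball (0:ℂ) 1, f z ∈ W (n k)) ∧
      eta W₀ (p (ψ k)) + ε/2 < ‖deriv f 0‖ := by
    intro k
    apply exists_of_lt_eta (c := eta W₀ (p (ψ k)) + ε/2)
    · have := eta_nonneg hW₀R (p (ψ k)); linarith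
    · have : ε ≤ eta (W (n k)) (p (ψ k)) - eta W₀ (p (ψ k)) := hpge (ψ k)
      linarith
  choose f hfdiff hf0 hfm hfd using hfex
  have hfd2R : ∀ k, ‖deriv (f k) 0‖ ≤ 2*R := fun k =>
    le_trans (le_eta (hWR (n k)) (hfdiff k) (hf0 k) (hfm k)) (eta_le (hWR (n k)) hR.le _)
  have hε2R : ε ≤ 2*R := by
    have h1 := hpge (ψ 0)
    have h2 := eta_le (hWR (φ (ψ 0))) hR.le (p (ψ 0))
    have h3 := eta_nonneg hW₀R (p (ψ 0))
    linarith
  set δ : ℝ := ε/(8*(2*R+1)) with hδdef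
  have hδ0 : 0 < δ := by positivity
  have hδ1 : δ < 1 := by
    rw [hδdef, div_lt_one (by positivity)]
    linarith
  have h1δ : 0 < 1 - δ := by linarith
  have hδ2R : δ * (2*R) ≤ ε/4 := by
    rw [hδdef, div_mul_eq_mul_div, div_le_div_iff₀ (by positivity) (by norm_num)]
    nlinarith
  set c : ℂ := ((1-δ : ℝ) : ℂ) with hcdef
  have habsc : ‖c‖ = 1-δ := by
    rw [hcdef, Complex.norm_real, Real.norm_eq_abs, abs_of_nonneg h1δ.le]
  set R₁ : ℝ := (1-δ)⁻¹ with hR₁def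
  have hR₁pos : 0 < R₁ := by rw [hR₁def]; positivity
  have hcancel : (1-δ) * R₁ = 1 := mul_inv_cancel₀ (ne_of_gt h1δ)
  have hR₁ : 1 < R₁ := by nlinarith
  have hmapsc : ∀ z ∈ ball (0:ℂ) R₁, c * z ∈ ball (0:ℂ) 1 := by
    intro z hz
    rw [mem_ball, dist_zero_right] at hz ⊢
    rw [norm_mul, habsc]
    calc (1-δ) * ‖z‖ < (1-δ) * R₁ := by exact mul_lt_mul_of_pos_left hz h1δ
      _ = 1 := hcancel
  set g : ℕ → ℂ → ℂ := fun k z => f k (c * z) with hgdef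
  have hgdiff : ∀ k, DifferentiableOn ℂ (g k) (ball (0:ℂ) R₁) := by
    intro k
    apply DifferentiableOn.comp (hfdiff k) (Differentiable.differentiableOn (by fun_prop)) hmapsc
  have hgbound : ∀ k, ∀ z ∈ ball (0:ℂ) R₁, ‖g k z‖ ≤ R := by
    intro k z hz
    have := hWR (n k) (hfm k _ (hmapsc z hz))
    rw [mem_ball, dist_zero_right] at this
    exact this.le
  obtain ⟨θ, G, hθ, hGconv⟩ := montel hR₁ g hgdiff hgbound
  set r : ℝ := (1+R₁)/2 with hrdef
  have hr1 : 1 < r := by rw [hrdef]; linarith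
  have hrR₁ : r < R₁ := by rw [hrdef]; linarith
  have hθtop : Tendsto θ atTop atTop := hθ.tendsto_atTop
  have hGlocal : TendstoLocallyUniformlyOn (fun j => g (θ j)) G atTop (ball (0:ℂ) r) :=
    (hGconv.tendstoLocallyUniformlyOn).mono ball_subset_closedBall
  have hgdiff' : ∀ j, DifferentiableOn ℂ (g (θ j)) (ball (0:ℂ) r) := fun j =>
    (hgdiff (θ j)).mono (ball_subset_ball hrR₁.le)
  have hGdiff : DifferentiableOn ℂ G (ball (0:ℂ) r) :=
    hGlocal.differentiableOn (Eventually.of_forall hgdiff') isOpen_ball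
  have h0r : (0:ℂ) ∈ ball (0:ℂ) r := by
    rw [mem_ball, dist_self]; linarith
  have hderivconv : Tendsto (fun j => deriv (g (θ j)) 0) atTop (𝓝 (deriv G 0)) :=
    (hGlocal.deriv (Eventually.of_forall hgdiff') isOpen_ball).tendsto_at h0r
  have hg0 : ∀ k, g k 0 = p (ψ k) := by
    intro k
    rw [hgdef]
    simp only [mul_zero]
    exact hf0 k
  have hG0 : G 0 = plim := by
    have h1 : Tendsto (fun j => g (θ j) 0) atTop (𝓝 (G 0)) := hGlocal.tendsto_at h0r
    have h2 : Tendsto (fun j => g (θ j) 0) atTop (𝓝 plim) := by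
      simp only [hg0]
      exact hpconv.comp hθtop
    exact tendsto_nhds_unique h1 h2
  have hgd0 : ∀ k, deriv (g k) 0 = deriv (f k) 0 * c := by
    intro k
    have hfd0 : HasDerivAt (f k) (deriv (f k) 0) 0 :=
      ((hfdiff k).differentiableAt (isOpen_ball.mem_nhds (by simp))).hasDerivAt
    have hcd : HasDerivAt (fun z : ℂ => c * z) c 0 := by
      simpa using (hasDerivAt_id (0:ℂ)).const_mul c
    have : HasDerivAt (g k) (deriv (f k) 0 * c) 0 :=
      HasDerivAt.comp (0:ℂ) (by simpa only [mul_zero] using hfd0) hcd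
    exact this.deriv
  have habsd : ∀ k, eta W₀ (p (ψ k)) + ε/4 ≤ ‖deriv (g k) 0‖ := by
    intro k
    rw [hgd0 k, norm_mul, habsc]
    have h1 := hfd k
    have h2 := hfd2R k
    nlinarith [norm_nonneg (deriv (f k) 0)]
  have hDlower : η₀ + ε/4 ≤ ‖deriv G 0‖ := by
    have h1 : Tendsto (fun j => eta W₀ (p (ψ (θ j))) + ε/4) atTop (𝓝 (η₀ + ε/4)) :=
      (hetaconv.comp hθtop).add tendsto_const_nhds
    have h2 : Tendsto (fun j => ‖deriv (g (θ j)) 0‖) atTop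
        (𝓝 (‖deriv G 0‖)) :=
      (continuous_norm.tendsto _).comp hderivconv
    exact le_of_tendsto_of_tendsto' h1 h2 (fun j => habsd (θ j))
  have hD0 : deriv G 0 ≠ 0 := by
    intro hD
    rw [hD] at hDlower
    simp only [norm_zero] at hDlower
    linarith
  have hGmem : ∀ z ∈ ball (0:ℂ) 1, G z ∈ closure W₀ := by
    intro z hz
    have hz' : z ∈ closedBall (0:ℂ) r := by
      rw [mem_closedBall]
      rw [mem_ball] at hz
      linarith
    have h1 : Tendsto (fun j => g (θ j) z) atTop (𝓝 (G z)) := hGconv.tendsto_at hz'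
    have hz1 : z ∈ ball (0:ℂ) R₁ := by
      rw [mem_ball] at hz ⊢
      linarith
    have hinf0 : Tendsto (fun j => infDist (g (θ j) z) (closure W₀)) atTop (𝓝 0) := by
      apply squeeze_zero (fun j => infDist_nonneg)
        (g := fun j => hausdorffDist (closure (W (n (θ j)))) (closure W₀))
      · intro j
        apply infDist_le_hausdorffDist_of_mem
          (subset_closure (hfm (θ j) _ (hmapsc z hz1)))
        apply Metric.hausdorffEdist_ne_top_of_nonempty_of_bounded
          ⟨0, subset_closure (h0 _)⟩ ⟨0, subset_closure h0W₀⟩ (hWbdd _).closure hW₀bdd.closure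
      · exact hcl.comp (hntop.comp hθtop)
    have hinf1 : Tendsto (fun j => infDist (g (θ j) z) (closure W₀)) atTop
        (𝓝 (infDist (G z) (closure W₀))) :=
      ((continuous_infDist_pt (closure W₀)).tendsto _).comp h1
    have h0' : infDist (G z) (closure W₀) = 0 := tendsto_nhds_unique hinf1 hinf0
    rw [infDist_closure] at h0'
    exact (mem_closure_iff_infDist_zero ⟨0, h0W₀⟩).mpr h0'
  by_cases hcase : ∀ z ∈ ball (0:ℂ) 1, G z ∈ W₀
  · have := le_eta hW₀R (hGdiff.mono (ball_subset_ball hr1.le)) hG0 hcase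
    linarith
  · push_neg at hcase
    obtain ⟨z₀, hz₀, hz₀W⟩ := hcase
    have hz₀r : z₀ ∈ ball (0:ℂ) r := ball_subset_ball hr1.le hz₀
    set q : ℂ := G z₀ with hqdef
    have hqfr : q ∈ frontier W₀ := by
      rw [frontier_eq_closure_inter_closure]
      refine ⟨hGmem z₀ hz₀, ?_⟩
      rw [_root_.mem_closure_iff]
      intro o ho hqo
      by_contra hno
      rw [not_nonempty_iff_eq_empty] at hno
      have : o ⊆ W₀ := by
        intro x hx
        by_contra hxW
        exact absurd (by exact ⟨hx, hxW⟩ : x ∈ o ∩ W₀ᶜ) (by rw [hno]; exact notMem_empty x)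
      exact hz₀W (this hqo)
    have hanG : AnalyticOnNhd ℂ G (ball (0:ℂ) r) := hGdiff.analyticOnNhd isOpen_ball
    rcases ((hanG z₀ hz₀r).sub analyticAt_const).eventually_eq_zero_or_eventually_ne_zero with
      hcase2 | hcase2
    · exfalso
      have hzero : EqOn (fun z => G z - q) 0 (ball (0:ℂ) r) :=
        (hanG.sub analyticOnNhd_const).eqOn_zero_of_preconnected_of_eventuallyEq_zero
          (convex_ball (0:ℂ) r).isPreconnected hz₀r hcase2
      have hEq : EqOn G (fun _ => q) (ball (0:ℂ) r) := by
        intro z hz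
        have := hzero hz
        simpa [sub_eq_zero] using this
      have hderiv0 : deriv G 0 = 0 := by
        have h1 : deriv G 0 = deriv (fun _ : ℂ => q) 0 :=
          Filter.EventuallyEq.deriv_eq (hEq.eventuallyEq_of_mem (isOpen_ball.mem_nhds h0r))
        rw [h1, deriv_const]
      exact hD0 hderiv0
    · -- isolated zeros: pick a circle on which G ≠ q
      have hz₀1 : ‖z₀‖ < 1 := by
        rw [mem_ball, dist_zero_right] at hz₀
        exact hz₀
      obtain ⟨ρ₁, hρ₁, hneq⟩ : ∃ ρ₁ > 0, ∀ w, dist w z₀ < ρ₁ → w ≠ z₀ → G w - q ≠ 0 := by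
        rw [eventually_nhdsWithin_iff, Metric.eventually_nhds_iff] at hcase2
        obtain ⟨ρ₁, hρ₁, hball⟩ := hcase2
        exact ⟨ρ₁, hρ₁, fun w hw hwne => hball hw (by simpa using hwne)⟩
      set ρ : ℝ := min (ρ₁/2) ((1 - ‖z₀‖)/2) with hρdef
      have hρ0 : 0 < ρ := by
        rw [hρdef]
        apply lt_min (by linarith) (by linarith)
      have hρρ₁ : ρ < ρ₁ := lt_of_le_of_lt (min_le_left _ _) (by linarith)
      have hρz₀ : ρ + ‖z₀‖ < 1 := by
        have := min_le_right (ρ₁/2) ((1 - ‖z₀‖)/2)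
        rw [← hρdef] at this
        linarith
      have hcb1 : closedBall z₀ ρ ⊆ ball (0:ℂ) 1 := by
        intro x hx
        rw [mem_closedBall] at hx
        rw [mem_ball, dist_zero_right]
        calc ‖x‖ ≤ dist x z₀ + ‖z₀‖ := by
              rw [dist_eq_norm]
              simpa using norm_add_le (x - z₀) z₀
          _ ≤ ρ + ‖z₀‖ := by
              linarith
          _ < 1 := hρz₀
      have hsphsub : sphere z₀ ρ ⊆ closedBall z₀ ρ := sphere_subset_closedBall
      -- minimum of |G - q| on the sphere
      obtain ⟨w₀, hw₀, hw₀min⟩ :=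
        (isCompact_sphere z₀ ρ).exists_isMinOn
          (NormedSpace.sphere_nonempty.mpr hρ0.le)
          (((hGdiff.continuousOn.mono (fun x hx => ball_subset_ball hr1.le
            (hcb1 (hsphsub hx)))).sub continuousOn_const).norm)
      set m : ℝ := ‖G w₀ - q‖ with hmdef
      have hm0 : 0 < m := by
        rw [hmdef, norm_pos_iff]
        apply hneq
        · rw [mem_sphere] at hw₀
          rw [hw₀]
          linarith
        · intro hw₀z₀
          rw [mem_sphere, hw₀z₀, dist_self] at hw₀
          linarith
      -- choose a good index j
      have hev : ∀ᶠ j in atTop, (∀ x ∈ closedBall (0:ℂ) r, dist (G x) (g (θ j) x) < m/6) ∧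
          hausdorffDist (frontier (W (n (θ j)))) (frontier W₀) < m/6 := by
        refine Filter.Eventually.and ?_ ?_
        · exact Metric.tendstoUniformlyOn_iff.mp hGconv (m/6) (by positivity)
        · exact ((hbd.comp (hntop.comp hθtop))).eventually (gt_mem_nhds (by positivity))
      obtain ⟨j, hj1, hj2⟩ := hev.exists
      have hfrfin : EMetric.hausdorffEdist (frontier (W (n (θ j)))) (frontier W₀) ≠ ⊤ :=
        Metric.hausdorffEdist_ne_top_of_nonempty_of_bounded
          (frontier_nonempty ⟨0, h0 _⟩ (hWbdd _)) (frontier_nonempty ⟨0, h0W₀⟩ hW₀bdd)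
          ((hWbdd _).closure.subset frontier_subset_closure)
          (hW₀bdd.closure.subset frontier_subset_closure)
      obtain ⟨w, hwfr, hqw⟩ := exists_dist_lt_of_hausdorffDist_lt' hqfr hj2 hfrfin
      rw [dist_comm] at hqw
      have hwnot : w ∉ W (n (θ j)) := by
        intro hwmem
        rw [frontier_eq_closure_inter_closure] at hwfr
        have := hwfr.2
        rw [_root_.mem_closure_iff] at this
        obtain ⟨y, hy1, hy2⟩ := this _ (hWopen (n (θ j))) hwmem
        exact hy2 hy1
      have hnonv : ∀ x ∈ closedBall z₀ ρ, g (θ j) x - w ≠ 0 := by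
        intro x hx hzero
        rw [sub_eq_zero] at hzero
        have hx1 : x ∈ ball (0:ℂ) R₁ := by
          have := hcb1 hx
          rw [mem_ball] at this ⊢
          linarith
        exact hwnot (hzero ▸ hfm (θ j) _ (hmapsc x hx1))
      -- lower bound for |g j - w| on the sphere
      have hsphlow : ∀ x ∈ sphere z₀ ρ, m/2 ≤ ‖g (θ j) x - w‖ := by
        intro x hx
        have hxc : x ∈ closedBall (0:ℂ) r := by
          have := hcb1 (hsphsub hx)
          rw [mem_ball] at this
          rw [mem_closedBall]
          linarith
        have h1 : m ≤ ‖G x - q‖ := hw₀min hx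
        have h2 : dist (G x) (g (θ j) x) < m/6 := hj1 x hxc
        have h3 : dist q w < m/6 := hqw
        have he : G x - q = (G x - g (θ j) x) + ((g (θ j) x - w) + (w - q)) := by ring
        have h4 : ‖G x - q‖ ≤ ‖G x - g (θ j) x‖ + (‖g (θ j) x - w‖ + ‖w - q‖) := by
          rw [he]
          exact (norm_add_le _ _).trans (by gcongr; exact norm_add_le _ _)
        rw [dist_eq_norm] at h2 h3
        have h5 : ‖w - q‖ = ‖q - w‖ := norm_sub_rev w q
        linarith
      -- maximum principle for 1/(g j - w) on the ball
      set Fi : ℂ → ℂ := fun x => (g (θ j) x - w)⁻¹ with hFidef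
      have hcbR₁ : closedBall z₀ ρ ⊆ ball (0:ℂ) R₁ := by
        intro x hx
        have := hcb1 hx
        rw [mem_ball] at this ⊢
        linarith
      have hFidiff : DifferentiableOn ℂ Fi (closedBall z₀ ρ) := by
        apply DifferentiableOn.inv
        · exact ((hgdiff (θ j)).mono hcbR₁).sub (differentiableOn_const w)
        · exact hnonv
      have hFicl : DiffContOnCl ℂ Fi (ball z₀ ρ) := by
        apply DifferentiableOn.diffContOnCl
        rwa [closure_ball z₀ (ne_of_gt hρ0)]
      have hFibound : ∀ x ∈ frontier (ball z₀ ρ), ‖Fi x‖ ≤ (m/2)⁻¹ := by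
        intro x hx
        rw [frontier_ball z₀ (ne_of_gt hρ0)] at hx
        rw [hFidef]
        simp only []
        rw [norm_inv]
        have h1 := hsphlow x hx
        have h2 : 0 < ‖g (θ j) x - w‖ := lt_of_lt_of_le (by linarith) h1
        rw [inv_le_inv₀ h2 (by linarith)]
        exact h1
      have hz₀cl : z₀ ∈ closure (ball z₀ ρ) := by
        rw [closure_ball z₀ (ne_of_gt hρ0)]
        exact mem_closedBall_self hρ0.le
      have hmax := Complex.norm_le_of_forall_mem_frontier_norm_le isBounded_ball hFicl
        hFibound hz₀cl
      have hz₀pos : (0:ℝ) < ‖g (θ j) z₀ - w‖ := by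
        rw [norm_pos_iff]
        exact hnonv z₀ (mem_closedBall_self hρ0.le)
      rw [hFidef] at hmax
      simp only [] at hmax
      rw [norm_inv, inv_le_inv₀ hz₀pos (by linarith)] at hmax
      -- but g j z₀ is close to q, and w is close to q: contradiction
      have hz₀c : z₀ ∈ closedBall (0:ℂ) r := by
        rw [mem_ball] at hz₀
        rw [mem_closedBall]
        linarith
      have h1 : dist (G z₀) (g (θ j) z₀) < m/6 := hj1 z₀ hz₀c
      have h2 : dist q w < m/6 := hqw
      have he : g (θ j) z₀ - w = (g (θ j) z₀ - G z₀) + (G z₀ - w) := by ring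
      have h3 : ‖g (θ j) z₀ - w‖ ≤ ‖g (θ j) z₀ - G z₀‖ + ‖G z₀ - w‖ := by
        rw [he]; exact norm_add_le _ _
      have h4 : ‖g (θ j) z₀ - G z₀‖ = dist (G z₀) (g (θ j) z₀) := by
        rw [dist_eq_norm, norm_sub_rev]
      have h5 : ‖G z₀ - w‖ = dist q w := by
        rw [dist_eq_norm, hqdef]
      linarith

end EtaAux


/-- Theorems 1.9 and 1.6 combined, for the trivial single-leaf foliation of a
bounded plane domain `U`: if the bounded connected open
sets `W n ⊆ U` converge to the bounded connected open set `W₀ ⊆ U` in the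
Hausdorff sense and `η_{W₀}` is continuous on `W₀`, then `η_{W n} → η_{W₀}`
uniformly on every compact subset of `W₀`. -/
theorem eta_uniform_convergence_of_hausdorff_convergence
    (U : Set ℂ) (hUopen : IsOpen U) (hUconn : IsConnected U)
    (hUbdd : Bornology.IsBounded U)
    (W : ℕ → Set ℂ) (W₀ : Set ℂ)
    (hWopen : ∀ n, IsOpen (W n)) (hWconn : ∀ n, IsConnected (W n))
    (hWbdd : ∀ n, Bornology.IsBounded (W n))
    (hWU : ∀ n, W n ⊆ U) (h0 : ∀ n, (0 : ℂ) ∈ W n)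
    (hW₀open : IsOpen W₀) (hW₀conn : IsConnected W₀)
    (hW₀bdd : Bornology.IsBounded W₀) (hW₀U : W₀ ⊆ U) (h0W₀ : (0 : ℂ) ∈ W₀)
    (hcl : Tendsto (fun n => hausdorffDist (closure (W n)) (closure W₀)) atTop (nhds 0))
    (hbd : Tendsto (fun n => hausdorffDist (frontier (W n)) (frontier W₀)) atTop (nhds 0))
    (hcont : ContinuousOn (eta W₀) W₀) :
    ∀ K : Set ℂ, IsCompact K → K ⊆ W₀ →
      TendstoUniformlyOn (fun n p => eta (W n) p) (fun p => eta W₀ p) atTop K := by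
  intro K hK hKW₀
  obtain ⟨R₀, hR₀⟩ := hUbdd.subset_ball 0
  have hRpos : (0:ℝ) < max R₀ 1 := lt_of_lt_of_le one_pos (le_max_right _ _)
  have hUR : U ⊆ ball (0:ℂ) (max R₀ 1) := hR₀.trans (ball_subset_ball (le_max_left _ _))
  have hWR : ∀ n, W n ⊆ ball (0:ℂ) (max R₀ 1) := fun n => (hWU n).trans hUR
  have hW₀R : W₀ ⊆ ball (0:ℂ) (max R₀ 1) := hW₀U.trans hUR
  rw [Metric.tendstoUniformlyOn_iff]
  intro ε hε
  have hA := EtaAux.claim_upper W W₀ hWopen hWbdd h0 hW₀open hW₀bdd h0W₀ hRpos hWR hW₀R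
    hcl hbd hcont hK hKW₀ hε
  have hB := EtaAux.claim_lower W W₀ hWopen hWbdd h0 hW₀open hW₀bdd h0W₀ hRpos hWR hW₀R
    hcl hbd hcont hK hKW₀ hε
  filter_upwards [hA, hB] with n hA' hB' p hp
  rw [Real.dist_eq, abs_sub_lt_iff]
  exact ⟨hB' p hp, hA' p hp⟩
end
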